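/- For every family of Boolean sequences s : ℕ → ℕ → Bool and every natural number k, if ω ^ 2 ≤ Ψ(s) then ω ^ 2 ≤ Ψ(fun i => s (i + k)). -/

import Mathlib

/-- A Boolean sequence `b` semidecides a proposition `Q` if `Q ↔ ∃ j, b j = true`. -/
def Semidecides (b : ℕ → Bool) (Q : Prop) : Prop :=
  Q ↔ ∃ j, b j = true

open Classical in
/-- `tCount s n k` is the number of indices `i < n` such that `s i j = true` for some `j ≤ k`. -/
noncomputable def tCount (s : ℕ → ℕ → Bool) (n k : ℕ) : ℕ :=
  ((Finset.range n).filter (fun i => ∃ j ≤ k, s i j = true)).card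

/-- The `n`-th characteristic approximant `Ψₙ(s)`. -/
noncomputable def psiApprox (s : ℕ → ℕ → Bool) (n : ℕ) : Ordinal :=
  ⨆ k : ℕ, (Ordinal.omega0 * (tCount s n k) + k)

/-- The characteristic ordinal `Ψ(s)`. -/
noncomputable def psi (s : ℕ → ℕ → Bool) : Ordinal :=
  ⨆ n : ℕ, (psiApprox s n + n)

open Classical in
theorem tCount_shift_le (s : ℕ → ℕ → Bool) (k n N : ℕ) :
    tCount s n N ≤ tCount (fun i => s (i + k)) n N + k := by
  classical
  unfold tCount
  set A := (Finset.range n).filter (fun i => ∃ j ≤ N, s i j = true) with hA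
  set B := (Finset.range n).filter (fun i => ∃ j ≤ N, s (i + k) j = true) with hB
  have hsplit := Finset.card_filter_add_card_filter_not
    (s := A) (p := fun i => k ≤ i)
  have h1 : (A.filter (fun i => k ≤ i)).card ≤ B.card := by
    apply Finset.card_le_card_of_injOn (fun i => i - k)
    · intro i hi
      simp only [Finset.mem_coe, Finset.mem_filter, hA, Finset.mem_range] at hi
      obtain ⟨⟨hin, j, hj, hs⟩, hk⟩ := hi
      simp only [Finset.mem_coe, hB, Finset.mem_filter, Finset.mem_range]
      refine ⟨lt_of_le_of_lt (Nat.sub_le i k) hin, j, hj, ?_⟩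
      rwa [Nat.sub_add_cancel hk]
    · intro i hi j hj hij
      simp only [Finset.mem_coe, Finset.mem_filter] at hi hj
      simp only at hij
      omega
  have h2 : (A.filter (fun i => ¬ k ≤ i)).card ≤ k := by
    calc (A.filter (fun i => ¬ k ≤ i)).card ≤ (Finset.range k).card := by
          apply Finset.card_le_card
          intro i hi
          simp only [Finset.mem_filter] at hi
          simp [Finset.mem_range]; omega
      _ = k := Finset.card_range k
  omega

theorem psi_shift (s : ℕ → ℕ → Bool) (k : ℕ)
    (h : Ordinal.omega0 ^ 2 ≤ psi s) :
    Ordinal.omega0 ^ 2 ≤ psi (fun i => s (i + k)) := by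
  set t := fun i => s (i + k) with ht
  rw [sq, Ordinal.mul_le_iff_of_isSuccLimit Ordinal.isSuccLimit_omega0]
  intro c hc
  obtain ⟨m, rfl⟩ := Ordinal.lt_omega0.1 hc
  -- Get a big approximant of psi s
  have hlt : Ordinal.omega0 * ((m + k + 2 : ℕ) : Ordinal) < psi s := by
    refine lt_of_lt_of_le ?_ h
    rw [sq]
    exact (mul_lt_mul_iff_right₀ Ordinal.omega0_pos).2 (Ordinal.nat_lt_omega0 _)
  rw [psi, Ordinal.lt_iSup_iff] at hlt
  obtain ⟨n, hn⟩ := hlt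
  -- the counting function attains its max
  have hbdd : ∀ j, tCount s n j ≤ n := by
    intro j
    calc tCount s n j ≤ (Finset.range n).card := Finset.card_filter_le _ _
      _ = n := Finset.card_range n
  have hNex : ∃ N, ∀ j, tCount s n j ≤ tCount s n N := by
    have hne : (Set.range (tCount s n)).Nonempty := Set.range_nonempty _
    have hbd : BddAbove (Set.range (tCount s n)) := by
      refine ⟨n, ?_⟩; rintro x ⟨j, rfl⟩; exact hbdd j
    obtain ⟨N, hN⟩ := Nat.sSup_mem hne hbd
    exact ⟨N, fun j => hN ▸ le_csSup hbd (Set.mem_range_self j)⟩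
  obtain ⟨N, hN⟩ := hNex
  set T := tCount s n N with hT
  have h1 : psiApprox s n ≤ Ordinal.omega0 * T + Ordinal.omega0 := by
    apply Ordinal.iSup_le
    intro j
    exact add_le_add (mul_le_mul_right (Nat.cast_le.2 (hN j)) _)
      (Ordinal.nat_lt_omega0 j).le
  have h2 : psiApprox s n + (n : Ordinal) ≤
      Ordinal.omega0 * ((T + 2 : ℕ) : Ordinal) := by
    have : Ordinal.omega0 * ((T + 2 : ℕ) : Ordinal) =
        Ordinal.omega0 * T + Ordinal.omega0 + Ordinal.omega0 := by
      have hc2 : ((T + 2 : ℕ) : Ordinal) = (T : Ordinal) + 1 + 1 := by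
        push_cast; rw [add_assoc]; norm_num
      rw [hc2, mul_add, mul_add, mul_one]
    rw [this]
    exact add_le_add h1 (Ordinal.nat_lt_omega0 n).le
  have hTm : m + k + 2 < T + 2 := by
    have := lt_of_lt_of_le hn h2
    rw [mul_lt_mul_iff_right₀ Ordinal.omega0_pos, Nat.cast_lt] at this
    exact this
  have hshift : m < tCount t n N := by
    have hle := tCount_shift_le s k n N
    rw [← ht] at hle
    omega
  -- conclude
  rw [psi]
  refine le_trans ?_ (le_ciSup (Ordinal.bddAbove_range _) n)
  refine le_add_of_le_of_nonneg ?_ zero_le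
  rw [psiApprox]
  refine le_trans ?_ (le_ciSup (Ordinal.bddAbove_range _) N)
  exact le_add_of_le_of_nonneg
    (mul_le_mul_right (Nat.cast_le.2 hshift.le) _) zero_le
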